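/- Let n ≥ 2, α ∈ (-n, 0), and φ a Young function satisfying Λ̲_φ(α) < ∞ and Λ̄_φ(α) < ∞, and let Ω ⊆ ℝⁿ be a globally n-regular domain with constant θ. Then there exist constants C₁, C₂ > 0 depending only on n, α, φ, θ such that for all t > 0, x ∈ Ω, and measurable E ⊂ Ω with 0 < |E| < ∞, one has ∫_{Ω\E} φ(t|x-y|^{-α})/|x-y|^{2n} dy ≥ C₁ (1/|E|)(|Ω\E|/|Ω|) φ(C₂ t |E|^{|α|/n}), where |Ω\E|/|Ω| is interpreted as 1 if |Ω| = ∞. -/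

import Mathlib

open MeasureTheory Set Filter
open scoped ENNReal NNReal Topology

noncomputable def Lunder (n : ℕ) (α : ℝ) (φ : ℝ → ℝ) : ℝ≥0∞ :=
  ⨆ x ∈ Set.Ioi (0:ℝ), ∫⁻ t in Set.Ioo (0:ℝ) 1,
    ENNReal.ofReal (φ (t ^ (1 - α) * x) / (φ x * t ^ (n + 1)))

noncomputable def Lover (n : ℕ) (α : ℝ) (φ : ℝ → ℝ) : ℝ≥0∞ :=
  ⨆ x ∈ Set.Ioi (0:ℝ), ∫⁻ t in Set.Ioi (1:ℝ),
    ENNReal.ofReal (φ (t ^ (-α) * x) / (φ x * t ^ (n + 1)))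

noncomputable def besovSet (n : ℕ) (α : ℝ) (φ : ℝ → ℝ)
    (Ω : Set (EuclideanSpace ℝ (Fin n))) (u : EuclideanSpace ℝ (Fin n) → ℝ) : Set ℝ :=
  {l : ℝ | 0 < l ∧
    (∫⁻ x in Ω, ∫⁻ y in Ω,
      ENNReal.ofReal (φ (|u x - u y| / (l * ‖x - y‖ ^ α)) / ‖x - y‖ ^ (2 * n))) ≤ 1}

lemma my_singleton_vol (n : ℕ) (hn : 1 ≤ n) (x : EuclideanSpace ℝ (Fin n)) :
    volume ({x} : Set (EuclideanSpace ℝ (Fin n))) = 0 := by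
  have h : ({x}: Set (EuclideanSpace ℝ (Fin n))) ⊆ Metric.closedBall x 0 := by simp
  refine le_antisymm (le_trans (measure_mono h) ?_) zero_le
  rw [Measure.addHaar_closedBall _ _ le_rfl, finrank_euclideanSpace_fin]
  rw [zero_pow (by omega), ENNReal.ofReal_zero, zero_mul]

lemma my_mono (φ : ℝ → ℝ) (hconv : ConvexOn ℝ (Set.Ici 0) φ) (hzero : φ 0 = 0)
    (hpos : ∀ t > 0, 0 < φ t) : MonotoneOn φ (Set.Ici 0) := by
  intro a ha b hb hab
  rcases eq_or_lt_of_le hab with rfl | hab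
  · exact le_rfl
  have ha0 : (0:ℝ) ≤ a := ha
  have hb0 : 0 < b := lt_of_le_of_lt ha0 hab
  have hab1 : a/b ≤ 1 := (div_le_one hb0).mpr hab.le
  have habn : 0 ≤ a/b := div_nonneg ha0 hb0.le
  have key := hconv.2 (mem_Ici.mpr le_rfl) (mem_Ici.mpr hb0.le)
      (show (0:ℝ) ≤ 1 - a/b by linarith) habn (by ring)
  rw [smul_zero, zero_add, smul_eq_mul, smul_eq_mul, smul_eq_mul,
    div_mul_cancel₀ _ hb0.ne', hzero, mul_zero, zero_add] at key
  have hφb : 0 ≤ φ b := (hpos b hb0).le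
  nlinarith

lemma my_dbl (n : ℕ) (α : ℝ) (hα2 : α < 0) (φ : ℝ → ℝ)
    (hmono : MonotoneOn φ (Set.Ici 0)) (hpos : ∀ t > 0, 0 < φ t)
    (hL2 : Lover n α φ < ⊤) :
    ∃ K > (0:ℝ), ∀ s > (0:ℝ), ∀ T : ℝ, 1 ≤ T → φ (T ^ (-α) * s) ≤ K * T ^ n * φ s := by
  set M := (Lover n α φ).toReal with hM
  refine ⟨M * 2 ^ (n+1) + 1, by positivity, ?_⟩
  intro s hs T hT
  have hT0 : (0:ℝ) < T := lt_of_lt_of_le one_pos hT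
  have hφs : 0 < φ s := hpos s hs
  have harg : (0:ℝ) < T ^ (-α) * s := mul_pos (Real.rpow_pos_of_pos hT0 _) hs
  have hφT : 0 < φ (T ^ (-α) * s) := hpos _ harg
  have hle : (∫⁻ t in Set.Ioi (1:ℝ),
      ENNReal.ofReal (φ (t ^ (-α) * s) / (φ s * t ^ (n + 1)))) ≤ Lover n α φ := by
    rw [Lover]
    exact le_biSup (fun x => ∫⁻ t in Set.Ioi (1:ℝ),
      ENNReal.ofReal (φ (t ^ (-α) * x) / (φ x * t ^ (n + 1)))) (Set.mem_Ioi.mpr hs)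
  have hlb : ENNReal.ofReal (φ (T ^ (-α) * s) / (φ s * (2*T) ^ (n + 1)) * T) ≤
      ∫⁻ t in Set.Ioi (1:ℝ), ENNReal.ofReal (φ (t ^ (-α) * s) / (φ s * t ^ (n + 1))) := by
    have h1 : ∫⁻ t in Set.Ioo T (2*T),
        ENNReal.ofReal (φ (T ^ (-α) * s) / (φ s * (2*T) ^ (n + 1))) ≤
        ∫⁻ t in Set.Ioo T (2*T),
        ENNReal.ofReal (φ (t ^ (-α) * s) / (φ s * t ^ (n + 1))) := by
      refine setLIntegral_mono' measurableSet_Ioo (fun u hu => ?_)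
      refine ENNReal.ofReal_le_ofReal ?_
      have hu1 : T < u := hu.1
      have hu2 : u < 2*T := hu.2
      have hu0 : 0 < u := lt_trans hT0 hu1
      refine div_le_div₀ (le_of_lt (hpos _ (mul_pos (Real.rpow_pos_of_pos hu0 _) hs)))
        ?_ (by positivity) ?_
      · refine hmono (mem_Ici.mpr harg.le)
          (mem_Ici.mpr (mul_pos (Real.rpow_pos_of_pos hu0 _) hs).le) ?_
        exact mul_le_mul_of_nonneg_right
          (Real.rpow_le_rpow hT0.le hu1.le (by linarith)) hs.le
      · exact mul_le_mul_of_nonneg_left (pow_le_pow_left₀ hu0.le hu2.le _) hφs.le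
    calc ENNReal.ofReal (φ (T ^ (-α) * s) / (φ s * (2*T) ^ (n + 1)) * T)
        = ENNReal.ofReal (φ (T ^ (-α) * s) / (φ s * (2*T) ^ (n + 1))) * ENNReal.ofReal T := by
          rw [ENNReal.ofReal_mul (by positivity)]
      _ = ∫⁻ _ in Set.Ioo T (2*T),
            ENNReal.ofReal (φ (T ^ (-α) * s) / (φ s * (2*T) ^ (n + 1))) := by
          rw [setLIntegral_const, Real.volume_Ioo]; ring_nf
      _ ≤ ∫⁻ t in Set.Ioo T (2*T),
            ENNReal.ofReal (φ (t ^ (-α) * s) / (φ s * t ^ (n + 1))) := h1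
      _ ≤ _ := lintegral_mono' (Measure.restrict_mono
            (fun u hu => Set.mem_Ioi.mpr (lt_of_le_of_lt hT hu.1)) le_rfl) le_rfl
  have hfin : Lover n α φ = ENNReal.ofReal M := by
    rw [hM, ENNReal.ofReal_toReal hL2.ne]
  have hreal : φ (T ^ (-α) * s) / (φ s * (2*T) ^ (n + 1)) * T ≤ M := by
    have := le_trans hlb hle
    rw [hfin] at this
    exact (ENNReal.ofReal_le_ofReal_iff ENNReal.toReal_nonneg).mp this
  have hden : (0:ℝ) < φ s * (2*T) ^ (n + 1) := by positivity
  rw [div_mul_eq_mul_div, div_le_iff₀ hden] at hreal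
  have h2T : (2*T) ^ (n+1) = 2^(n+1) * (T^n * T) := by
    rw [mul_pow, pow_succ]; ring
  have hM0 : 0 ≤ M := ENNReal.toReal_nonneg
  have step : φ (T ^ (-α) * s) * T ≤ (M * 2^(n+1) * T^n * φ s) * T := by
    rw [h2T] at hreal; nlinarith
  have step2 := le_of_mul_le_mul_right step hT0
  have hTn : 0 < T^n * φ s := mul_pos (pow_pos hT0 n) hφs
  nlinarith

theorem stmt13 (n : ℕ) (hn : 2 ≤ n) (α : ℝ) (hα1 : -(n : ℝ) < α) (hα2 : α < 0)
    (φ : ℝ → ℝ)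
    (hconv : ConvexOn ℝ (Set.Ici 0) φ) (hcont : ContinuousOn φ (Set.Ici 0))
    (hzero : φ 0 = 0) (hpos : ∀ t > 0, 0 < φ t)
    (htop : Filter.Tendsto φ Filter.atTop Filter.atTop)
    (hL1 : Lunder n α φ < ⊤) (hL2 : Lover n α φ < ⊤)
    (θ : ℝ) (hθ : θ ∈ Set.Ioo (0:ℝ) 1) :
    ∃ C₁ > (0:ℝ), ∃ C₂ > (0:ℝ), ∀ Ω : Set (EuclideanSpace ℝ (Fin n)),
      IsOpen Ω → IsConnected Ω →
      (∀ x ∈ Ω, ∀ r : ℝ, 0 < r → ENNReal.ofReal r < 2 * EMetric.diam Ω →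
        ENNReal.ofReal (θ * r ^ n) ≤ volume (Metric.ball x r ∩ Ω)) →
      ∀ t : ℝ, 0 < t → ∀ x ∈ Ω, ∀ E ⊆ Ω, MeasurableSet E →
        0 < volume E → volume E < ⊤ →
        ENNReal.ofReal (C₁ * (volume E).toReal⁻¹ *
            (if volume Ω = ⊤ then 1 else (volume (Ω \ E)).toReal / (volume Ω).toReal) *
            φ (C₂ * t * (volume E).toReal ^ (|α| / n)))
          ≤ ∫⁻ y in Ω \ E,
              ENNReal.ofReal (φ (t * ‖x - y‖ ^ (-α)) / ‖x - y‖ ^ (2 * n)) := by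
  obtain ⟨hθ0, hθ1⟩ := hθ
  have hmono := my_mono φ hconv hzero hpos
  obtain ⟨K, hK0, hKd⟩ := my_dbl n α hα2 φ hmono hpos hL2
  have hn0 : (0:ℝ) < n := by positivity
  have hnne : (n:ℝ) ≠ 0 := hn0.ne'
  have hαabs : |α| = -α := abs_of_neg hα2
  have h3θ : (0:ℝ) < 3/θ := by positivity
  refine ⟨θ^2/(9*K), by positivity, (3/θ) ^ (-α/(n:ℝ)),
    Real.rpow_pos_of_pos h3θ _, ?_⟩
  set C₁ := θ^2/(9*K) with hC₁def
  set C₂ := ((3/θ) ^ (-α/(n:ℝ)) : ℝ) with hC₂def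
  intro Ω hopen hconn hreg t ht x hx E hEΩ hEm hE0 hEfin
  set e := (volume E).toReal with he_def
  have he : 0 < e := ENNReal.toReal_pos hE0.ne' hEfin.ne
  have hvE : volume E = ENNReal.ofReal e := (ENNReal.ofReal_toReal hEfin.ne).symm
  have h3e : (0:ℝ) < 3*e/θ := by positivity
  set R₀ := ((3*e/θ) ^ ((n:ℝ)⁻¹) : ℝ) with hR₀def
  have hR₀ : 0 < R₀ := Real.rpow_pos_of_pos h3e _
  have hR₀n : R₀ ^ n = 3*e/θ := by
    rw [hR₀def, ← Real.rpow_natCast ((3*e/θ) ^ ((n:ℝ)⁻¹)) n, ← Real.rpow_mul h3e.le,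
      inv_mul_cancel₀ hnne, Real.rpow_one]
  set Φ := φ (C₂ * t * e ^ (|α| / (n:ℝ))) with hΦdef
  have hΦarg : 0 < C₂ * t * e ^ (|α| / (n:ℝ)) := by
    have := Real.rpow_pos_of_pos he (|α| / (n:ℝ))
    have hC₂pos : 0 < C₂ := Real.rpow_pos_of_pos h3θ _
    positivity
  have hΦ : 0 < Φ := hpos _ hΦarg
  have hR₀β : t * R₀ ^ (-α) = C₂ * t * e ^ (|α| / (n:ℝ)) := by
    rw [hαabs, hR₀def, ← Real.rpow_mul h3e.le]
    have h1 : 3*e/θ = (3/θ) * e := by ring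
    rw [h1, Real.mul_rpow h3θ.le he.le, hC₂def]
    have h2 : (n:ℝ)⁻¹ * -α = -α / (n:ℝ) := by ring
    rw [h2]; ring
  -- pointwise lower bound
  have key : ∀ P : ℝ, 0 < P → P ≤ R₀ → ∀ y : EuclideanSpace ℝ (Fin n),
      ‖x - y‖ ≤ P → ‖x - y‖ ≠ 0 →
      ENNReal.ofReal (Φ / (K * (R₀^n * P^n))) ≤
      ENNReal.ofReal (φ (t * ‖x - y‖ ^ (-α)) / ‖x - y‖ ^ (2*n)) := by
    intro P hP hPR y hyP hy0
    set d := ‖x - y‖ with hd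
    have hd0 : 0 < d := lt_of_le_of_ne (norm_nonneg _) (Ne.symm hy0)
    apply ENNReal.ofReal_le_ofReal
    have hT1 : 1 ≤ R₀ / d := (one_le_div hd0).mpr (le_trans hyP hPR)
    have hs0 : 0 < t * d ^ (-α) := mul_pos ht (Real.rpow_pos_of_pos hd0 _)
    have hdbl := hKd (t * d^(-α)) hs0 (R₀/d) hT1
    have harg : (R₀/d) ^ (-α) * (t * d ^ (-α)) = t * R₀ ^ (-α) := by
      rw [Real.div_rpow hR₀.le hd0.le]
      have hdne : d ^ (-α) ≠ 0 := (Real.rpow_pos_of_pos hd0 _).ne'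
      field_simp
    rw [harg, hR₀β, ← hΦdef, div_pow] at hdbl
    have hφd : 0 ≤ φ (t * d^(-α)) := (hpos _ hs0).le
    rw [div_le_div_iff₀ (by positivity) (by positivity)]
    have h1 : Φ * d^n ≤ K * R₀^n * φ (t*d^(-α)) := by
      have hdn : 0 < d^n := pow_pos hd0 n
      calc Φ * d^n ≤ (K * (R₀^n/d^n) * φ (t*d^(-α))) * d^n :=
            mul_le_mul_of_nonneg_right hdbl hdn.le
        _ = K * R₀^n * φ (t*d^(-α)) := by field_simp
    have hdP : d^n ≤ P^n := pow_le_pow_left₀ hd0.le hyP n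
    have h2n : d^(2*n) = d^n * d^n := by rw [two_mul, pow_add]
    calc Φ * d^(2*n) = (Φ * d^n) * d^n := by rw [h2n]; ring
      _ ≤ (K * R₀^n * φ (t*d^(-α))) * d^n :=
          mul_le_mul_of_nonneg_right h1 (pow_nonneg hd0.le n)
      _ ≤ (K * R₀^n * φ (t*d^(-α))) * P^n :=
          mul_le_mul_of_nonneg_left hdP (by positivity)
      _ = φ (t*d^(-α)) * (K * (R₀^n * P^n)) := by ring
  set ratio := (if volume Ω = ⊤ then 1 else (volume (Ω \ E)).toReal / (volume Ω).toReal)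
    with hratiodef
  have hvΩE_le : volume (Ω \ E) ≤ volume Ω := measure_mono diff_subset
  have hvEΩ : volume E ≤ volume Ω := measure_mono hEΩ
  have hratio0 : 0 ≤ ratio := by
    rw [hratiodef]; split
    · norm_num
    · exact div_nonneg ENNReal.toReal_nonneg ENNReal.toReal_nonneg
  have hratio1 : ratio ≤ 1 := by
    rw [hratiodef]; split
    · exact le_rfl
    · rename_i hΩtop
      rcases eq_or_ne (volume Ω).toReal 0 with h0 | h0
      · rw [h0]; simp
      · have hvt : 0 < (volume Ω).toReal :=
          lt_of_le_of_ne ENNReal.toReal_nonneg (Ne.symm h0)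
        exact (div_le_one hvt).mpr (ENNReal.toReal_mono hΩtop hvΩE_le)
  have hsing := my_singleton_vol n (by omega) x
  by_cases hcase : ENNReal.ofReal R₀ < 2 * EMetric.diam Ω
  · -- Case A
    have hball := hreg x hx R₀ hR₀ hcase
    have h3E : ENNReal.ofReal (3*e) ≤ volume (Metric.ball x R₀ ∩ Ω) := by
      rw [hR₀n] at hball
      have : θ * (3*e/θ) = 3*e := by field_simp
      rwa [this] at hball
    set A := ((Metric.ball x R₀ ∩ Ω) \ E) \ {x} with hA
    have hAsub : A ⊆ Ω \ E := fun y hy => ⟨hy.1.1.2, hy.1.2⟩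
    have hAmeas : MeasurableSet A :=
      ((measurableSet_ball.inter hopen.measurableSet).diff hEm).diff
        (measurableSet_singleton x)
    have hAvol : ENNReal.ofReal (2*e) ≤ volume A := by
      have hsub : Metric.ball x R₀ ∩ Ω ⊆ A ∪ (E ∪ {x}) := by
        intro y hy
        by_cases hyE : y ∈ E ∪ ({x} : Set (EuclideanSpace ℝ (Fin n)))
        · exact Or.inr hyE
        · exact Or.inl ⟨⟨hy, fun h => hyE (Or.inl h)⟩, fun h => hyE (Or.inr h)⟩
      have h1 : volume (Metric.ball x R₀ ∩ Ω) ≤ volume A + ENNReal.ofReal e := by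
        calc volume (Metric.ball x R₀ ∩ Ω) ≤ volume (A ∪ (E ∪ {x})) := measure_mono hsub
          _ ≤ volume A + volume (E ∪ {x}) := measure_union_le _ _
          _ ≤ volume A + (volume E + volume {x}) :=
              add_le_add le_rfl (measure_union_le _ _)
          _ = volume A + ENNReal.ofReal e := by rw [hsing, add_zero, ← hvE]
      have h2 := le_trans h3E h1
      have h3 : ENNReal.ofReal (3*e) = ENNReal.ofReal (2*e) + ENNReal.ofReal e := by
        rw [← ENNReal.ofReal_add (by positivity) he.le]; congr 1; ring
      rw [h3] at h2
      exact (ENNReal.add_le_add_iff_right ENNReal.ofReal_ne_top).mp h2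
    set c := Φ / (K * (R₀^n * R₀^n)) with hc
    have hc0 : 0 ≤ c := by positivity
    have hreal : C₁ * e⁻¹ * ratio * Φ ≤ c * (2*e) := by
      have hcval : c * (2*e) = C₁ * e⁻¹ * (2 * Φ) := by
        rw [hc, hC₁def, hR₀n]; field_simp; ring
      rw [hcval]
      have : ratio * Φ ≤ 2 * Φ := by nlinarith
      calc C₁ * e⁻¹ * ratio * Φ = (C₁ * e⁻¹) * (ratio * Φ) := by ring
        _ ≤ (C₁ * e⁻¹) * (2 * Φ) := mul_le_mul_of_nonneg_left this (by positivity)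
        _ = C₁ * e⁻¹ * (2 * Φ) := by ring
    calc ENNReal.ofReal (C₁ * e⁻¹ * ratio * Φ)
        ≤ ENNReal.ofReal (c * (2*e)) := ENNReal.ofReal_le_ofReal hreal
      _ = ENNReal.ofReal c * ENNReal.ofReal (2*e) := ENNReal.ofReal_mul hc0
      _ ≤ ENNReal.ofReal c * volume A := mul_le_mul_right hAvol _
      _ = ∫⁻ _ in A, ENNReal.ofReal c := (setLIntegral_const _ _).symm
      _ ≤ ∫⁻ y in A, ENNReal.ofReal (φ (t * ‖x - y‖ ^ (-α)) / ‖x - y‖ ^ (2*n)) := by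
          refine setLIntegral_mono' hAmeas (fun y hy => ?_)
          have hyball : y ∈ Metric.ball x R₀ := hy.1.1.1
          have hdist : ‖x - y‖ ≤ R₀ := by
            rw [← dist_eq_norm]
            exact le_of_lt (by rw [dist_comm]; exact Metric.mem_ball.mp hyball)
          have hne : ‖x - y‖ ≠ 0 := by
            rw [norm_ne_zero_iff, sub_ne_zero]
            exact fun h => hy.2 (mem_singleton_iff.mpr h.symm)
          exact key R₀ hR₀ le_rfl y hdist hne
      _ ≤ _ := lintegral_mono' (Measure.restrict_mono hAsub le_rfl) le_rfl
  · -- Case B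
    push_neg at hcase
    have hdne : EMetric.diam Ω ≠ ⊤ := by
      intro h
      rw [h, ENNReal.mul_top (by norm_num)] at hcase
      exact ENNReal.ofReal_ne_top (top_le_iff.mp hcase)
    set D := (EMetric.diam Ω).toReal with hDdef
    have hediam : EMetric.diam Ω = ENNReal.ofReal D := (ENNReal.ofReal_toReal hdne).symm
    have hΩsub : Ω ⊆ Metric.closedBall x D := by
      intro y hy
      rw [Metric.mem_closedBall, dist_comm, dist_edist]
      exact ENNReal.toReal_mono hdne (EMetric.edist_le_diam_of_mem hx hy)
    have hvΩtop : volume Ω ≠ ⊤ :=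
      ((measure_mono hΩsub).trans_lt measure_closedBall_lt_top).ne
    have hD0 : 0 < D := by
      rcases lt_or_eq_of_le (ENNReal.toReal_nonneg (a := EMetric.diam Ω)) with h | h
      · exact h
      · exfalso
        have hzero : EMetric.diam Ω = 0 := by
          rcases (ENNReal.toReal_eq_zero_iff _).mp h.symm with h' | h'
          · exact h'
          · exact absurd h' hdne
        have hsub := EMetric.diam_eq_zero_iff.mp hzero
        rcases hsub.eq_empty_or_singleton with h' | ⟨a, h'⟩
        · rw [h'] at hx; exact hx
        · have : volume Ω = 0 := by rw [h']; exact my_singleton_vol n (by omega) a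
          exact absurd (lt_of_lt_of_le hE0 hvEΩ) (by rw [this]; exact lt_irrefl 0)
    have hDR₀ : D ≤ R₀ := by
      have h2D : ENNReal.ofReal (2*D) ≤ ENNReal.ofReal R₀ := by
        rw [ENNReal.ofReal_mul (by norm_num)]
        calc ENNReal.ofReal 2 * ENNReal.ofReal D = 2 * EMetric.diam Ω := by
              rw [hediam]; norm_num
          _ ≤ ENNReal.ofReal R₀ := hcase
      have := (ENNReal.ofReal_le_ofReal_iff hR₀.le).mp h2D
      linarith
    have hvΩD : θ * D^n ≤ (volume Ω).toReal := by
      have hDlt : ENNReal.ofReal D < 2 * EMetric.diam Ω := by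
        rw [hediam, two_mul]
        exact ENNReal.lt_add_right ENNReal.ofReal_ne_top
          ((ENNReal.ofReal_pos.mpr hD0).ne')
      have h1 := hreg x hx D hD0 hDlt
      have h2 : ENNReal.ofReal (θ * D^n) ≤ volume Ω :=
        le_trans h1 (measure_mono inter_subset_right)
      calc θ * D^n = (ENNReal.ofReal (θ * D^n)).toReal :=
            (ENNReal.toReal_ofReal (by positivity)).symm
        _ ≤ (volume Ω).toReal := ENNReal.toReal_mono hvΩtop h2
    have hvΩt : 0 < (volume Ω).toReal := lt_of_lt_of_le (by positivity) hvΩD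
    set w := (volume (Ω \ E)).toReal with hwdef
    have hw0 : 0 ≤ w := ENNReal.toReal_nonneg
    have hratioeq : ratio = w / (volume Ω).toReal := by
      rw [hratiodef, if_neg hvΩtop]
    set c := Φ / (K * (R₀^n * D^n)) with hc
    have hc0 : 0 ≤ c := by positivity
    have hreal : C₁ * e⁻¹ * ratio * Φ ≤ c * w := by
      rw [hratioeq]
      have h1 : w / (volume Ω).toReal ≤ w / (θ * D^n) :=
        div_le_div_of_nonneg_left hw0 (by positivity) hvΩD
      have step1 : C₁ * e⁻¹ * (w / (volume Ω).toReal) * Φ ≤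
          C₁ * e⁻¹ * (w / (θ * D^n)) * Φ :=
        mul_le_mul_of_nonneg_right
          (mul_le_mul_of_nonneg_left h1 (by positivity : (0:ℝ) ≤ C₁ * e⁻¹)) hΦ.le
      have hL2nn : 0 ≤ C₁ * e⁻¹ * (w / (θ * D^n)) * Φ :=
        mul_nonneg (mul_nonneg (by positivity) (div_nonneg hw0 (by positivity))) hΦ.le
      have heq : c * w = 3 * (C₁ * e⁻¹ * (w / (θ * D^n)) * Φ) := by
        rw [hc, hC₁def, hR₀n]
        field_simp
        ring
      linarith
    set A := (Ω \ E) \ {x} with hA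
    have hAmeas : MeasurableSet A :=
      (hopen.measurableSet.diff hEm).diff (measurableSet_singleton x)
    calc ENNReal.ofReal (C₁ * e⁻¹ * ratio * Φ)
        ≤ ENNReal.ofReal (c * w) := ENNReal.ofReal_le_ofReal hreal
      _ = ENNReal.ofReal c * ENNReal.ofReal w := ENNReal.ofReal_mul hc0
      _ = ENNReal.ofReal c * volume (Ω \ E) := by
          rw [hwdef, ENNReal.ofReal_toReal (lt_of_le_of_lt hvΩE_le
            (lt_top_iff_ne_top.mpr hvΩtop)).ne]
      _ = ENNReal.ofReal c * volume A := by rw [hA, measure_diff_null hsing]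
      _ = ∫⁻ _ in A, ENNReal.ofReal c := (setLIntegral_const _ _).symm
      _ ≤ ∫⁻ y in A, ENNReal.ofReal (φ (t * ‖x - y‖ ^ (-α)) / ‖x - y‖ ^ (2*n)) := by
          refine setLIntegral_mono' hAmeas (fun y hy => ?_)
          have hdist : ‖x - y‖ ≤ D := by
            have := hΩsub hy.1.1
            rw [Metric.mem_closedBall, dist_comm, dist_eq_norm] at this
            exact this
          have hne : ‖x - y‖ ≠ 0 := by
            rw [norm_ne_zero_iff, sub_ne_zero]
            exact fun h => hy.2 (mem_singleton_iff.mpr h.symm)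
          exact key D hD0 hDR₀ y hdist hne
      _ ≤ _ := lintegral_mono' (Measure.restrict_mono
            (fun y hy => hy.1) le_rfl) le_rfl
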